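/- Let α, α̃ be minimizers of the Lasso objectives with dictionaries D and D̃ respectively on the same input x with ‖x‖₂ ≤ 1 + ν, and suppose ‖D − D̃‖₂ ≤ ε ≤ 2λ/(1+ν)². Then ‖Dα − Dα̃‖₂² ≤ (25ε/λ)(1+ν)². -/

import Mathlib

open scoped BigOperators
open Finset

noncomputable def l2 {n : ℕ} (x : Fin n → ℝ) : ℝ := Real.sqrt (∑ i, (x i) ^ 2)

noncomputable def l1 {n : ℕ} (x : Fin n → ℝ) : ℝ := ∑ i, |x i|

noncomputable def inp {n : ℕ} (x y : Fin n → ℝ) : ℝ := ∑ i, x i * y i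

/-- The Lasso objective `z ↦ (1/2)‖x − Dz‖₂² + λ‖z‖₁`. -/
noncomputable def lassoObj {d p : ℕ} (D : Matrix (Fin d) (Fin p) ℝ) (lam : ℝ)
    (x : Fin d → ℝ) (z : Fin p → ℝ) : ℝ :=
  (1 / 2) * (l2 (x - D.mulVec z)) ^ 2 + lam * l1 z

noncomputable def e2 {n : ℕ} (z : Fin n → ℝ) : EuclideanSpace ℝ (Fin n) :=
  (WithLp.equiv 2 (Fin n → ℝ)).symm z

lemma l2_eq {n : ℕ} (z : Fin n → ℝ) : l2 z = ‖e2 z‖ := by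
  rw [EuclideanSpace.norm_eq]
  simp [l2, e2, Real.norm_eq_abs, sq_abs]

lemma e2_sub {n : ℕ} (u v : Fin n → ℝ) : e2 (u - v) = e2 u - e2 v :=
  rfl

lemma e2_add {n : ℕ} (u v : Fin n → ℝ) : e2 (u + v) = e2 u + e2 v :=
  rfl

lemma e2_smul {n : ℕ} (c : ℝ) (u : Fin n → ℝ) : e2 (c • u) = c • e2 u :=
  rfl

lemma e2_neg {n : ℕ} (u : Fin n → ℝ) : e2 (-u) = -e2 u :=
  rfl

lemma l2_nonneg {n : ℕ} (z : Fin n → ℝ) : 0 ≤ l2 z := Real.sqrt_nonneg _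

lemma l2_neg {n : ℕ} (z : Fin n → ℝ) : l2 (-z) = l2 z := by
  rw [l2_eq, l2_eq, e2_neg, norm_neg]

lemma l1_nonneg {n : ℕ} (z : Fin n → ℝ) : 0 ≤ l1 z :=
  Finset.sum_nonneg fun _ _ => abs_nonneg _

lemma l2_le_l1 {n : ℕ} (z : Fin n → ℝ) : l2 z ≤ l1 z := by
  have h : ∑ i, (z i) ^ 2 ≤ (∑ i, |z i|) ^ 2 := by
    have := Finset.sum_sq_le_sq_sum_of_nonneg (s := Finset.univ)
      (f := fun i => |z i|) (fun i _ => abs_nonneg _)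
    simpa [sq_abs] using this
  calc l2 z ≤ Real.sqrt ((∑ i, |z i|) ^ 2) := Real.sqrt_le_sqrt h
    _ = l1 z := by
        rw [Real.sqrt_sq (Finset.sum_nonneg fun i _ => abs_nonneg _)]; rfl

lemma key_par {n : ℕ} (u v : Fin n → ℝ) :
    (l2 ((1/2 : ℝ) • (u + v)))^2 = ((l2 u)^2 + (l2 v)^2)/2 - (l2 (u - v))^2/4 := by
  have hp := parallelogram_law_with_norm ℝ (e2 u) (e2 v)
  rw [l2_eq, l2_eq, l2_eq, l2_eq, e2_smul, e2_add, e2_sub, norm_smul]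
  simp only [Real.norm_eq_abs]
  rw [abs_of_nonneg (by norm_num : (0:ℝ) ≤ 1/2)]
  nlinarith [hp]

lemma l2_sub_triangle {n : ℕ} (u v : Fin n → ℝ) : l2 u ≤ l2 v + l2 (u - v) := by
  rw [l2_eq, l2_eq, l2_eq, e2_sub]
  simpa using norm_le_insert' (e2 u) (e2 v)

-- small arithmetic helper lemmas (kept standalone so linarith/nlinarith run in tiny contexts)
lemma auxA {t K lam L X : ℝ} (hlam : 0 < lam) (hL0 : 0 ≤ L) (ht0 : 0 ≤ t)
    (hX0 : 0 ≤ X) (hXK : X ≤ K)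
    (h : 1 / 2 * t ^ 2 + lam * L ≤ 1 / 2 * X ^ 2 + lam * 0) : t ≤ K := by
  nlinarith [mul_nonneg hlam.le hL0]

lemma auxB {t K lam L X : ℝ} (hlam : 0 < lam) (hL0 : 0 ≤ L) (ht0 : 0 ≤ t)
    (hX0 : 0 ≤ X) (hXK : X ≤ K)
    (h : 1 / 2 * t ^ 2 + lam * L ≤ 1 / 2 * X ^ 2 + lam * 0) : lam * L ≤ K ^ 2 / 2 := by
  nlinarith [sq_nonneg t]

lemma auxEps {lam e L K : ℝ} (hlam : 0 < lam) (he : 0 ≤ e) (hL0 : 0 ≤ L)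
    (hL : lam * L ≤ K ^ 2 / 2) (he' : e * K ^ 2 ≤ 2 * lam) : e * L ≤ 1 := by
  have h1 : lam * (e * L) ≤ lam * 1 := by
    nlinarith [mul_le_mul_of_nonneg_left hL he]
  exact le_of_mul_le_mul_left h1 hlam

lemma auxSC {a b c sv Δ N M L Lt lam : ℝ} (hlam : 0 ≤ lam)
    (hmid : 1 / 2 * a ^ 2 + lam * L ≤ 1 / 2 * N ^ 2 + lam * M)
    (hpar : N ^ 2 = (a ^ 2 + b ^ 2) / 2 - Δ ^ 2 / 4)
    (hM : M ≤ (L + Lt) / 2)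
    (hmA : 1 / 2 * c ^ 2 + lam * Lt ≤ 1 / 2 * sv ^ 2 + lam * L) :
    Δ ^ 2 ≤ 2 * (b ^ 2 - c ^ 2) + 2 * (sv ^ 2 - a ^ 2) := by
  nlinarith [mul_le_mul_of_nonneg_left hM hlam]

lemma auxQ {b c t K : ℝ} (hb0 : 0 ≤ b) (hc0 : 0 ≤ c) (hcK : c ≤ K) (ht0 : 0 ≤ t)
    (ht1 : t ≤ 1) (hK1 : 1 ≤ K) (hbb : b ≤ c + t) : b ^ 2 - c ^ 2 ≤ 3 * K * t := by
  nlinarith [mul_self_le_mul_self hb0 hbb]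

lemma auxFinal {D2 K lam e L Lt : ℝ} (hlam : 0 < lam) (he : 0 ≤ e) (hK1 : 1 ≤ K)
    (hK2 : K ≤ 2) (hD : D2 ≤ 6 * K * (e * Lt) + 6 * K * (e * L))
    (hL : lam * L ≤ K ^ 2 / 2) (hLt : lam * Lt ≤ K ^ 2 / 2) :
    D2 ≤ 25 * e / lam * K ^ 2 := by
  rw [div_mul_eq_mul_div, le_div_iff₀ hlam]
  have h6K : (0:ℝ) ≤ 6 * K * e := mul_nonneg (by linarith) he
  nlinarith [mul_le_mul_of_nonneg_right hD hlam.le,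
    mul_le_mul_of_nonneg_left hLt h6K,
    mul_le_mul_of_nonneg_left hL h6K,
    mul_nonneg (mul_nonneg he (sq_nonneg K)) (show (0:ℝ) ≤ 25 - 6 * K by linarith)]

set_option maxHeartbeats 1000000 in
/-- the reconstructions (with the same dictionary D) of the two Lasso
solutions obtained from nearby dictionaries are close. -/
theorem stmt7 {d p : ℕ} (D Dt : Matrix (Fin d) (Fin p) ℝ) (lam ν ε : ℝ)
    (hlam : 0 < lam) (hν : 0 ≤ ν) (hν1 : ν ≤ 1) (hε0 : 0 ≤ ε)
    (hε : ε ≤ 2 * lam / (1 + ν) ^ 2)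
    (x : Fin d → ℝ) (hx : l2 x ≤ 1 + ν)
    (hop : ∀ z : Fin p → ℝ, l2 ((D - Dt).mulVec z) ≤ ε * l2 z)
    (α : Fin p → ℝ) (hmin : ∀ z, lassoObj D lam x α ≤ lassoObj D lam x z)
    (αt : Fin p → ℝ) (hmint : ∀ z, lassoObj Dt lam x αt ≤ lassoObj Dt lam x z) :
    (l2 (D.mulVec α - D.mulVec αt)) ^ 2 ≤ (25 * ε / lam) * (1 + ν) ^ 2 := by
  have hε' : ε * (1 + ν) ^ 2 ≤ 2 * lam := by
    rw [le_div_iff₀ (by positivity)] at hε; exact hε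
  -- hypotheses in raw form
  have hmin0 := hmin 0
  have hmint0 := hmint 0
  have hmA := hmint α
  simp only [lassoObj, Matrix.mulVec_zero, sub_zero] at hmin0 hmint0
  have hl10 : l1 (0 : Fin p → ℝ) = 0 := by simp [l1]
  rw [hl10] at hmin0 hmint0
  simp only [lassoObj] at hmA
  -- epsilon bounds
  have hEa : l2 ((D - Dt).mulVec α) ≤ ε * l1 α :=
    le_trans (hop α) (mul_le_mul_of_nonneg_left (l2_le_l1 α) hε0)
  have hEt : l2 ((D - Dt).mulVec αt) ≤ ε * l1 αt :=
    le_trans (hop αt) (mul_le_mul_of_nonneg_left (l2_le_l1 αt) hε0)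
  -- triangle bounds
  have hbb : l2 (x - D.mulVec αt) ≤ l2 (x - Dt.mulVec αt) + ε * l1 αt := by
    have h := l2_sub_triangle (x - D.mulVec αt) (x - Dt.mulVec αt)
    have heq : (x - D.mulVec αt) - (x - Dt.mulVec αt) = -((D - Dt).mulVec αt) := by
      funext j
      simp only [Matrix.sub_mulVec, Pi.sub_apply, Pi.neg_apply]
      ring
    rw [heq, l2_neg] at h
    exact le_trans h (by linarith only [hEt])
  have hss : l2 (x - Dt.mulVec α) ≤ l2 (x - D.mulVec α) + ε * l1 α := by
    have h := l2_sub_triangle (x - Dt.mulVec α) (x - D.mulVec α)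
    have heq : (x - Dt.mulVec α) - (x - D.mulVec α) = (D - Dt).mulVec α := by
      funext j
      simp only [Matrix.sub_mulVec, Pi.sub_apply]
      ring
    rw [heq] at h
    exact le_trans h (by linarith only [hEa])
  -- strong convexity at the midpoint
  have hmid := hmin ((1/2 : ℝ) • (α + αt))
  simp only [lassoObj] at hmid
  have hrw : x - D.mulVec ((1/2:ℝ) • (α + αt))
      = (1/2:ℝ) • ((x - D.mulVec α) + (x - D.mulVec αt)) := by
    rw [Matrix.mulVec_smul, Matrix.mulVec_add]
    funext j
    simp only [Pi.smul_apply, Pi.sub_apply, Pi.add_apply, smul_eq_mul]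
    ring
  rw [hrw] at hmid
  have hpar := key_par (x - D.mulVec α) (x - D.mulVec αt)
  have hdiff : (x - D.mulVec α) - (x - D.mulVec αt) = -(D.mulVec α - D.mulVec αt) := by
    funext j
    simp only [Pi.sub_apply, Pi.neg_apply]
    ring
  rw [hdiff, l2_neg] at hpar
  have hl1mid : l1 ((1/2:ℝ) • (α + αt)) ≤ (l1 α + l1 αt)/2 := by
    simp only [l1, Pi.smul_apply, Pi.add_apply, smul_eq_mul]
    have hterm : ∀ i : Fin p, |1/2 * (α i + αt i)| ≤ (|α i| + |αt i|)/2 := fun i => by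
      rw [abs_mul, abs_of_nonneg (by norm_num : (0:ℝ) ≤ 1/2)]
      have := abs_add_le (α i) (αt i); linarith
    calc ∑ i, |1/2 * (α i + αt i)| ≤ ∑ i, (|α i| + |αt i|)/2 :=
          Finset.sum_le_sum fun i _ => hterm i
      _ = ((∑ i, |α i|) + ∑ i, |αt i|)/2 := by
          rw [← Finset.sum_div, Finset.sum_add_distrib]
  -- abbreviate and make atoms opaque
  set K : ℝ := 1 + ν with hKdef
  set a := l2 (x - D.mulVec α) with hadef
  set b := l2 (x - D.mulVec αt) with hbdef
  set c := l2 (x - Dt.mulVec αt) with hcdef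
  set sv := l2 (x - Dt.mulVec α) with hsdef
  set Δ := l2 (D.mulVec α - D.mulVec αt) with hΔdef
  set L := l1 α with hLdef
  set Lt := l1 αt with hLtdef
  set M := l1 ((1/2:ℝ) • (α + αt)) with hMdef
  set N := l2 ((1/2:ℝ) • ((x - D.mulVec α) + (x - D.mulVec αt))) with hNdef
  set X := l2 x with hXdef
  have ha0 : 0 ≤ a := l2_nonneg _
  have hb0 : 0 ≤ b := l2_nonneg _
  have hc0 : 0 ≤ c := l2_nonneg _
  have hs0 : 0 ≤ sv := l2_nonneg _
  have hL0 : 0 ≤ L := l1_nonneg _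
  have hLt0 : 0 ≤ Lt := l1_nonneg _
  have hx0 : 0 ≤ X := l2_nonneg _
  clear_value K a b c sv Δ L Lt M N X
  clear hmin hmint hop hEa hEt hl10 hrw hdiff
  have hK1 : (1:ℝ) ≤ K := by rw [hKdef]; linarith only [hν]
  have hK2 : K ≤ 2 := by rw [hKdef]; linarith only [hν1]
  -- arithmetic
  have haK : a ≤ K := auxA hlam hL0 ha0 hx0 hx hmin0
  have hcK : c ≤ K := auxA hlam hLt0 hc0 hx0 hx hmint0
  have hL : lam * L ≤ K^2/2 := auxB hlam hL0 ha0 hx0 hx hmin0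
  have hLt : lam * Lt ≤ K^2/2 := auxB hlam hLt0 hc0 hx0 hx hmint0
  have hεL : ε * L ≤ 1 := auxEps hlam hε0 hL0 hL hε'
  have hεLt : ε * Lt ≤ 1 := auxEps hlam hε0 hLt0 hLt hε'
  have hεL0 : 0 ≤ ε * L := mul_nonneg hε0 hL0
  have hεLt0 : 0 ≤ ε * Lt := mul_nonneg hε0 hLt0
  have hsc : Δ^2 ≤ 2*(b^2-c^2) + 2*(sv^2-a^2) := auxSC hlam.le hmid hpar hl1mid hmA
  have hq1 : b^2 - c^2 ≤ 3*K*(ε*Lt) := auxQ hb0 hc0 hcK hεLt0 hεLt hK1 hbb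
  have hq2 : sv^2 - a^2 ≤ 3*K*(ε*L) := auxQ hs0 ha0 haK hεL0 hεL hK1 hss
  have hDK : Δ^2 ≤ 6*K*(ε*Lt) + 6*K*(ε*L) := by linarith only [hsc, hq1, hq2]
  exact auxFinal hlam hε0 hK1 hK2 hDK hL hLt
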